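/- arXiv:2306.07549 — 6 statements merged into one kernel-verified Lean document; each statement's English description precedes it below -/
import Mathlib

section
/- Consider one stage of the SHVar budget allocation: a finite set A of k arms with known positive reward variances σ_i² for i ∈ A, a budget of n_s rounds, and pull counts N_{t,i} = #{ℓ < t : I_ℓ = i} where at each round t ∈ {1,…,n_s} the pulled arm I_t is any arm maximizing σ_i²/N_{t,i} over i ∈ A (with the convention σ_i²/0 = +∞). Let λ_i = (σ_i² / Σ_{j∈A} σ_j²) · n_s for each i ∈ A, and suppose every λ_i is a (positive) integer. Then the final pull counts satisfy N_i = λ_i for every arm i ∈ A, where N_i = #{t ∈ {1,…,n_s} : I_t = i}. -/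
open Finset
open scoped ENNReal NNReal

/-- One stage of the `SHVar` budget allocation: a finite type `ι` of arms
with positive reward variances `v i = σ_i²`, a budget of `ns` rounds, pulled arms
`I 0, …, I (ns-1)`, and pull counts `N t i = #{ℓ < t : I ℓ = i}`.  In every round `t < ns`
the pulled arm maximizes `v i / N t i` over all arms (with the convention `x / 0 = ∞`,
expressed in `ℝ≥0∞`).  If every `λ_i = (v i / Σ_j v j) · ns` is a positive integer, then
the final pull count of every arm `i` equals `λ_i`. -/
theorem shvar_stage_allocation_exact
    {ι : Type*} [Fintype ι] [DecidableEq ι] [Nonempty ι]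
    (v : ι → ℝ) (hv : ∀ i, 0 < v i)
    (ns : ℕ) (I : ℕ → ι)
    (N : ℕ → ι → ℕ)
    (hN : ∀ t i, N t i = ((Finset.range t).filter (fun ℓ => I ℓ = i)).card)
    (hgreedy : ∀ t < ns, ∀ j : ι,
      ENNReal.ofReal (v j) / (N t j : ℝ≥0∞)
        ≤ ENNReal.ofReal (v (I t)) / (N t (I t) : ℝ≥0∞))
    (hint : ∀ i : ι, ∃ m : ℕ, 0 < m ∧ (m : ℝ) = v i / (∑ j, v j) * ns) :
    ∀ i : ι, (N ns i : ℝ) = v i / (∑ j, v j) * ns := by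
  classical
  choose m hm hmval using hint
  set S := ∑ j, v j with hSdef
  have hSpos : 0 < S := Finset.sum_pos (fun j _ => hv j) Finset.univ_nonempty
  have hns : 0 < ns := by
    rcases Nat.eq_zero_or_pos ns with h | h
    · exfalso
      obtain ⟨i⟩ := (inferInstance : Nonempty ι)
      have h0 : (m i : ℝ) = 0 := by rw [hmval i, h]; simp
      have h1 := hm i
      rw [Nat.cast_eq_zero] at h0
      omega
    · exact h
  have hsum_m : ∑ i, m i = ns := by
    have h1 : ((∑ i, m i : ℕ) : ℝ) = ns := by
      push_cast
      rw [Finset.sum_congr rfl (fun i _ => hmval i), ← Finset.sum_mul, ← Finset.sum_div]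
      field_simp
      exact hSdef.symm
    exact_mod_cast h1
  have hratio : ∀ i, v i / (m i : ℝ) = S / ns := by
    intro i
    rw [hmval i]
    have h1 : v i ≠ 0 := (hv i).ne'
    have h2 : S ≠ 0 := hSpos.ne'
    have h3 : (ns : ℝ) ≠ 0 := Nat.cast_ne_zero.mpr hns.ne'
    field_simp
  have hsumN : ∀ t, ∑ i, N t i = t := by
    intro t
    have := Finset.card_eq_sum_card_fiberwise
      (f := I) (s := Finset.range t) (t := Finset.univ) (fun x _ => Finset.mem_univ _)
    simp only [Finset.card_range] at this
    rw [Finset.sum_congr rfl (fun i _ => hN t i)]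
    exact this.symm
  have hstep : ∀ t i, N (t+1) i = N t i + if I t = i then 1 else 0 := by
    intro t i
    rw [hN, hN, Finset.range_add_one, Finset.filter_insert]
    split_ifs with h
    · rw [Finset.card_insert_of_notMem (by simp)]
    · rfl
  have key : ∀ t, t ≤ ns → ∀ i, N t i ≤ m i := by
    intro t
    induction t with
    | zero => intro _ i; simp [hN]
    | succ t ih =>
      intro ht i
      have ht' : t < ns := ht
      have ihle := ih ht'.le
      rw [hstep]
      split_ifs with h
      · -- i = I t; show N t i < m i
        subst h
        suffices hlt : N t (I t) < m (I t) by omega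
        by_contra hge
        have heq : N t (I t) = m (I t) := le_antisymm (ihle _) (by omega)
        -- find under-quota arm
        obtain ⟨j, hj⟩ : ∃ j, N t j < m j := by
          by_contra hc
          push_neg at hc
          have hall : ∀ j, N t j = m j := fun j => le_antisymm (ihle j) (hc j)
          have : (t : ℕ) = ns := by
            rw [← hsumN t, Finset.sum_congr rfl (fun j _ => hall j), hsum_m]
          omega
        have hg := hgreedy t ht' j
        rw [heq] at hg
        rcases Nat.eq_zero_or_pos (N t j) with h0 | hpos
        · -- LHS infinite, RHS finite
          rw [h0] at hg
          have hlhs : ENNReal.ofReal (v j) / ((0 : ℕ) : ℝ≥0∞) = ⊤ := by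
            rw [Nat.cast_zero]
            exact ENNReal.div_zero (by rw [Ne, ENNReal.ofReal_eq_zero]; exact not_le.mpr (hv j))
          rw [hlhs] at hg
          have hrhs : ENNReal.ofReal (v (I t)) / ((m (I t) : ℕ) : ℝ≥0∞) < ⊤ :=
            ENNReal.div_lt_top ENNReal.ofReal_ne_top (by exact_mod_cast (hm (I t)).ne')
          exact absurd (top_le_iff.mp hg) hrhs.ne
        · -- all finite; compare reals
          have hmj : 0 < (m j : ℝ) := by exact_mod_cast hm j
          have hNj : 0 < ((N t j : ℕ) : ℝ) := by exact_mod_cast hpos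
          have hreal : v (I t) / (m (I t) : ℝ) < v j / (N t j : ℝ) := by
            rw [hratio (I t), ← hratio j]
            exact div_lt_div_of_pos_left (hv j) hNj (by exact_mod_cast hj)
          have hle : v j / (N t j : ℝ) ≤ v (I t) / (m (I t) : ℝ) := by
            have e1 : ENNReal.ofReal (v j) / ((N t j : ℕ) : ℝ≥0∞)
                = ENNReal.ofReal (v j / (N t j : ℝ)) := by
              rw [ENNReal.ofReal_div_of_pos hNj, ENNReal.ofReal_natCast]
            have e2 : ENNReal.ofReal (v (I t)) / ((m (I t) : ℕ) : ℝ≥0∞)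
                = ENNReal.ofReal (v (I t) / (m (I t) : ℝ)) := by
              rw [ENNReal.ofReal_div_of_pos (by exact_mod_cast hm (I t)), ENNReal.ofReal_natCast]
            rw [e1, e2] at hg
            have := (ENNReal.ofReal_le_ofReal_iff (div_nonneg (hv _).le (Nat.cast_nonneg _))).mp hg
            exact this
          linarith
      · exact (ihle i)
  -- finish
  have hfin : ∀ i, N ns i = m i := by
    have hsums : ∑ i, N ns i = ∑ i, m i := by rw [hsumN, hsum_m]
    have := (Finset.sum_eq_sum_iff_of_le (fun i _ => key ns le_rfl i)).mp hsums
    intro i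
    exact this i (Finset.mem_univ i)
  intro i
  rw [hfin i, hmval i]
end

section
/- Let X_1, …, X_{N+1} be i.i.d. samples from a Gaussian distribution N(μ, σ²) with σ > 0, let μ̂ = (1/(N+1)) Σ_{ℓ=1}^{N+1} X_ℓ be the sample mean and σ̂² = (1/N) Σ_{ℓ=1}^{N+1} (X_ℓ − μ̂)² the unbiased sample variance. Fix δ ∈ (0,1) and suppose N > 4 log(1/δ). Then with probability at least 1 − δ, σ² < σ̂² / (1 − 2 √(log(1/δ)/N)). -/
open MeasureTheory ProbabilityTheory Real Finset
open scoped ENNReal NNReal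



lemma my_integral_rexp_quadratic {b : ℝ} (hb : b < 0) (c : ℝ) :
    ∫ x : ℝ, rexp (b * x ^ 2 + c * x) = Real.sqrt (π / -b) * rexp (-(c ^ 2 / (4 * b))) := by
  have h := integral_cexp_quadratic (b := (b : ℂ)) (by simpa using hb) (c : ℂ) 0
  have hL : (∫ x : ℝ, Complex.exp ((b : ℂ) * x ^ 2 + (c : ℂ) * x + 0))
      = ((∫ x : ℝ, rexp (b * x ^ 2 + c * x) : ℝ) : ℂ) := by
    rw [show (fun x : ℝ => Complex.exp ((b : ℂ) * x ^ 2 + (c : ℂ) * x + 0))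
        = (fun x : ℝ => ((rexp (b * x ^ 2 + c * x) : ℝ) : ℂ)) from ?_]
    · exact (integral_ofReal (𝕜 := ℂ))
    ext x
    rw [Complex.ofReal_exp]
    push_cast
    ring_nf
  have hpos : (0:ℝ) < π / -b := div_pos Real.pi_pos (by linarith)
  have hR : ((π : ℂ) / -(b : ℂ)) ^ (1 / 2 : ℂ) * Complex.exp (0 - (c:ℂ) ^ 2 / (4 * (b:ℂ)))
      = ((Real.sqrt (π / -b) * rexp (-(c ^ 2 / (4 * b))) : ℝ) : ℂ) := by
    have h1 : ((π : ℂ) / -(b : ℂ)) = ((π / -b : ℝ) : ℂ) := by push_cast; ring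
    have h12 : ((1:ℂ) / 2) = (((1:ℝ)/2 : ℝ) : ℂ) := by norm_num
    rw [h1, h12, ← Complex.ofReal_cpow hpos.le]
    have h2 : (π / -b : ℝ) ^ ((1:ℝ) / 2) = Real.sqrt (π / -b) := by
      rw [Real.sqrt_eq_rpow]
    rw [h2]
    rw [show (0 - (c:ℂ) ^ 2 / (4 * (b:ℂ))) = ((-(c ^ 2 / (4 * b)) : ℝ) : ℂ) by push_cast; ring,
      ← Complex.ofReal_exp, ← Complex.ofReal_mul]
  rw [hL, hR] at h
  exact_mod_cast h

lemma my_integral_gauss01 (f : ℝ → ℝ) :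
    ∫ x, f x ∂(gaussianReal 0 1) = ∫ x, gaussianPDFReal 0 1 x * f x := by
  rw [gaussianReal_of_var_ne_zero 0 one_ne_zero]
  rw [show gaussianPDF 0 1 = (fun x => ((Real.toNNReal (gaussianPDFReal 0 1 x) : ℝ≥0) : ℝ≥0∞))
    from rfl]
  rw [integral_withDensity_eq_integral_smul
    ((measurable_gaussianPDFReal 0 1).real_toNNReal) f]
  congr 1; ext x
  rw [NNReal.smul_def, smul_eq_mul, Real.coe_toNNReal _ (gaussianPDFReal_nonneg 0 1 x)]

lemma my_gauss_pdf01 (x : ℝ) :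
    gaussianPDFReal 0 1 x = (Real.sqrt (2 * π))⁻¹ * rexp (-(x ^ 2) / 2) := by
  simp [gaussianPDFReal]

lemma my_gauss_mgf_quad {c : ℝ} (hc : c < 1 / 2) (b : ℝ) :
    ∫ x, rexp (c * x ^ 2 + b * x) ∂(gaussianReal 0 1)
      = rexp (b ^ 2 / (2 * (1 - 2 * c))) / Real.sqrt (1 - 2 * c) := by
  have hs : (0:ℝ) < 1 - 2 * c := by linarith
  rw [my_integral_gauss01]
  have h1 : ∀ x : ℝ, gaussianPDFReal 0 1 x * rexp (c * x ^ 2 + b * x)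
      = (Real.sqrt (2 * π))⁻¹ * rexp ((c - 1/2) * x ^ 2 + b * x) := by
    intro x
    rw [my_gauss_pdf01, mul_assoc, ← Real.exp_add]
    congr 2
    ring
  simp_rw [h1]
  rw [integral_const_mul, my_integral_rexp_quadratic (by linarith : c - 1/2 < 0) b]
  have h2 : -(b ^ 2 / (4 * (c - 1/2))) = b ^ 2 / (2 * (1 - 2 * c)) := by
    rw [← div_neg]
    congr 1
    ring
  rw [h2]
  have h3 : π / -(c - 1/2) = 2 * π / (1 - 2 * c) := by
    rw [div_eq_div_iff (by linarith) (by linarith)]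
    ring
  rw [h3, Real.sqrt_div (by positivity : (0:ℝ) ≤ 2 * π)]
  have h2pi : Real.sqrt (2 * π) ≠ 0 := by positivity
  have hss : Real.sqrt (1 - 2 * c) ≠ 0 := by positivity
  field_simp

lemma my_gauss_int_quad {c : ℝ} (hc : c < 1 / 2) (b : ℝ) :
    Integrable (fun x => rexp (c * x ^ 2 + b * x)) (gaussianReal 0 1) := by
  rw [gaussianReal_of_var_ne_zero 0 one_ne_zero]
  rw [integrable_withDensity_iff (measurable_gaussianPDF 0 1)
    (ae_of_all _ fun x => ENNReal.ofReal_lt_top)]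
  have h1 : ∀ x : ℝ, rexp (c * x ^ 2 + b * x) * (gaussianPDF 0 1 x).toReal
      = (Real.sqrt (2 * π))⁻¹ * rexp ((c - 1/2) * x ^ 2 + b * x) := by
    intro x
    rw [gaussianPDF, ENNReal.toReal_ofReal (gaussianPDFReal_nonneg 0 1 x), my_gauss_pdf01]
    rw [mul_comm, mul_assoc, ← Real.exp_add]
    congr 2
    ring
  simp_rw [h1]
  apply Integrable.const_mul
  have h2 := (integrable_cexp_quadratic' (b := ((c : ℂ) - 1/2))
    (by simp; linarith) (b : ℂ) 0).norm
  have h3 : (fun x : ℝ => ‖Complex.exp (((c:ℂ) - 1/2) * x ^ 2 + (b:ℂ) * x + 0)‖)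
      = fun x : ℝ => rexp ((c - 1/2) * x ^ 2 + b * x) := by
    ext x
    rw [show ((c:ℂ) - 1/2) * (x:ℂ) ^ 2 + (b:ℂ) * (x:ℂ) + 0
        = (((c - 1/2) * x ^ 2 + b * x : ℝ) : ℂ) by push_cast; ring]
    rw [Complex.norm_exp, Complex.ofReal_re]
  rwa [h3] at h2

lemma my_exp_ineq {u : ℝ} (h0 : 0 ≤ u) (h1 : u ≤ 1) : rexp (u - u ^ 2 / 2) ≤ 1 + u := by
  have hA : rexp u ≤ 1 + u + u ^ 2 / 2 + u ^ 3 / 2 := by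
    have h := Real.exp_bound' h0 h1 (n := 3) (by norm_num)
    have hs : (∑ m ∈ Finset.range 3, u ^ m / m.factorial) = 1 + u + u ^ 2 / 2 := by
      simp [Finset.sum_range_succ]
    rw [hs] at h
    have h3 : u ^ 3 * ((3:ℕ) + 1 : ℝ) / ((Nat.factorial 3 : ℝ) * (3:ℕ)) ≤ u ^ 3 / 2 := by
      norm_num [Nat.factorial]
      nlinarith [pow_nonneg h0 3]
    linarith
  have hB : 1 + u ^ 2 / 2 ≤ rexp (u ^ 2 / 2) := by
    have := Real.add_one_le_exp (u ^ 2 / 2)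
    linarith
  have hC : rexp u ≤ (1 + u) * rexp (u ^ 2 / 2) := by
    calc rexp u ≤ 1 + u + u ^ 2 / 2 + u ^ 3 / 2 := hA
    _ = (1 + u) * (1 + u ^ 2 / 2) := by ring
    _ ≤ (1 + u) * rexp (u ^ 2 / 2) := by nlinarith
  have hpos : (0:ℝ) < rexp (u ^ 2 / 2) := Real.exp_pos _
  rw [show u - u ^ 2 / 2 = u - u ^ 2 / 2 from rfl, Real.exp_sub, div_le_iff₀ hpos]
  exact hC

lemma my_gauss_mgf_lin (b : ℝ) :
    ∫ x, rexp (b * x) ∂(gaussianReal 0 1) = rexp (b ^ 2 / 2) := by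
  have h := my_gauss_mgf_quad (c := 0) (by norm_num) b
  simpa using h

lemma my_mgf_core {Ω : Type*} [MeasurableSpace Ω] (P : Measure Ω) [IsProbabilityMeasure P]
    (n : ℕ) (W : Fin (n + 1) → Ω → ℝ) (hWmeas : ∀ i, Measurable (W i))
    (hWindep : iIndepFun W P)
    (hWmap : ∀ i, Measure.map (W i) P = gaussianReal 0 1)
    {lam : ℝ} (hlam : 0 < lam) :
    ∫ ω, rexp (-lam * ((∑ i, (W i ω) ^ 2) - (∑ i, W i ω) ^ 2 / (n + 1))) ∂P
      = ((Real.sqrt (1 + 2 * lam))⁻¹) ^ n := by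
  have hn1 : (0:ℝ) < (n:ℝ) + 1 := by positivity
  set a : ℝ := Real.sqrt (2 * lam / (n + 1)) with ha_def
  have ha2 : a ^ 2 = 2 * lam / (n + 1) := Real.sq_sqrt (by positivity)
  set s : ℝ := Real.sqrt (1 + 2 * lam) with hs_def
  have hspos : 0 < s := Real.sqrt_pos.2 (by linarith)
  set F : ℝ → Ω → ℝ :=
    fun g ω => rexp (∑ i, (-lam * (W i ω) ^ 2 + (a * g) * W i ω)) with hF_def
  -- Step 1: integral over Ω for fixed g
  have hstep1 : ∀ g : ℝ,
      ∫ ω, F g ω ∂P = (rexp ((a * g) ^ 2 / (2 * (1 + 2 * lam))) / s) ^ (n + 1) := by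
    intro g
    have hφm : Measurable (fun y : ℝ => -lam * y ^ 2 + (a * g) * y) := by fun_prop
    have hZindep := hWindep.comp (fun _ => fun y : ℝ => -lam * y ^ 2 + (a * g) * y)
      (fun _ => hφm)
    have hZmeas : ∀ i, Measurable ((fun y : ℝ => -lam * y ^ 2 + (a * g) * y) ∘ W i) :=
      fun i => hφm.comp (hWmeas i)
    have hmgf := hZindep.mgf_sum hZmeas Finset.univ (t := 1)
    have hL : mgf (∑ i, ((fun y : ℝ => -lam * y ^ 2 + (a * g) * y) ∘ W i)) P 1
        = ∫ ω, F g ω ∂P := by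
      unfold mgf
      congr 1
      ext ω
      simp [hF_def, Finset.sum_apply]
    have hone : ∀ i : Fin (n + 1),
        mgf ((fun y : ℝ => -lam * y ^ 2 + (a * g) * y) ∘ W i) P 1
          = rexp ((a * g) ^ 2 / (2 * (1 + 2 * lam))) / s := by
      intro i
      unfold mgf
      simp only [one_mul, Function.comp_apply]
      have hmap : ∫ ω, rexp (-lam * (W i ω) ^ 2 + (a * g) * W i ω) ∂P
          = ∫ y, rexp (-lam * y ^ 2 + (a * g) * y) ∂(Measure.map (W i) P) :=
        (integral_map (φ := W i) (f := fun y => rexp (-lam * y ^ 2 + (a * g) * y))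
          (hWmeas i).aemeasurable ((measurable_exp.comp hφm).aestronglyMeasurable)).symm
      rw [hmap, hWmap i]
      have h := my_gauss_mgf_quad (c := -lam) (by linarith) (a * g)
      rw [h, show (1 - 2 * -lam) = 1 + 2 * lam by ring, hs_def]
    rw [← hL, hmgf]
    rw [Finset.prod_congr rfl (fun i _ => hone i), Finset.prod_const, Finset.card_univ,
      Fintype.card_fin]
  -- Step 2: integral over g for fixed ω
  have hstep2 : ∀ ω : Ω,
      ∫ g, F g ω ∂(gaussianReal 0 1)
        = rexp (-lam * ((∑ i, (W i ω) ^ 2) - (∑ i, W i ω) ^ 2 / (n + 1))) := by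
    intro ω
    have hsum : ∀ g : ℝ, (∑ i, (-lam * (W i ω) ^ 2 + (a * g) * W i ω))
        = (-lam * ∑ i, (W i ω) ^ 2) + (a * (∑ i, W i ω)) * g := by
      intro g
      rw [Finset.sum_add_distrib, ← Finset.mul_sum, ← Finset.mul_sum]
      ring
    have hFg : ∀ g : ℝ, F g ω
        = rexp (-lam * ∑ i, (W i ω) ^ 2) * rexp ((a * (∑ i, W i ω)) * g) := by
      intro g
      rw [hF_def]
      simp only
      rw [hsum g, Real.exp_add]
    simp_rw [hFg]
    rw [integral_const_mul, my_gauss_mgf_lin (a * (∑ i, W i ω)), ← Real.exp_add]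
    congr 1
    have : (a * (∑ i, W i ω)) ^ 2 = (2 * lam / (n + 1)) * (∑ i, W i ω) ^ 2 := by
      rw [mul_pow, ha2]
    rw [this]
    field_simp
    ring
  -- Integrability on the product
  have hFmeas : Measurable (Function.uncurry F) := by
    apply Measurable.exp
    apply Finset.measurable_sum
    intro i _
    have h1 : Measurable fun p : ℝ × Ω => W i p.2 := (hWmeas i).comp measurable_snd
    fun_prop
  have hpt : ∀ g : ℝ, (rexp ((a * g) ^ 2 / (2 * (1 + 2 * lam))) / s) ^ (n + 1)
      = rexp ((lam / (1 + 2 * lam)) * g ^ 2 + 0 * g) * (s⁻¹) ^ (n + 1) := by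
    intro g
    rw [div_pow, ← Real.exp_nat_mul]
    push_cast
    rw [show ((n : ℝ) + 1) * ((a * g) ^ 2 / (2 * (1 + 2 * lam)))
        = (lam / (1 + 2 * lam)) * g ^ 2 + 0 * g from by
      rw [mul_pow, ha2]; field_simp; ring]
    rw [div_eq_mul_inv, inv_pow]
  have hc2 : lam / (1 + 2 * lam) < 1 / 2 := by
    rw [div_lt_iff₀ (by linarith)]
    linarith
  have hFint : Integrable (Function.uncurry F) ((gaussianReal 0 1).prod P) := by
    rw [integrable_prod_iff hFmeas.aestronglyMeasurable]
    constructor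
    · refine ae_of_all _ fun g => ?_
      have hbdd : ∀ ω, ‖F g ω‖ ≤ rexp ((n + 1) * ((a * g) ^ 2 / (4 * lam))) := by
        intro ω
        rw [Real.norm_eq_abs, abs_of_pos (Real.exp_pos _), Real.exp_le_exp]
        calc ∑ i, (-lam * (W i ω) ^ 2 + (a * g) * W i ω)
            ≤ ∑ _i : Fin (n + 1), (a * g) ^ 2 / (4 * lam) := by
              apply Finset.sum_le_sum
              intro i _
              rw [le_div_iff₀ (by positivity : (0:ℝ) < 4 * lam)]
              nlinarith [sq_nonneg (a * g - 2 * lam * W i ω)]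
          _ = (n + 1) * ((a * g) ^ 2 / (4 * lam)) := by
              rw [Finset.sum_const, Finset.card_univ, Fintype.card_fin]
              push_cast
              ring
      exact (integrable_const _).mono'
        ((hFmeas.comp measurable_prodMk_left).aestronglyMeasurable)
        (ae_of_all _ hbdd)
    · have hval : (fun g => ∫ ω, ‖F g ω‖ ∂P)
          = fun g => (rexp ((lam / (1 + 2 * lam)) * g ^ 2 + 0 * g)) * (s⁻¹) ^ (n + 1) := by
        ext g
        have : ∀ ω, ‖F g ω‖ = F g ω := fun ω => by
          rw [Real.norm_eq_abs, abs_of_pos (Real.exp_pos _)]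
        simp_rw [this]
        rw [hstep1 g, hpt g]
      show Integrable (fun g => ∫ ω, ‖F g ω‖ ∂P) (gaussianReal 0 1)
      rw [hval]
      exact (my_gauss_int_quad hc2 0).mul_const _
  -- assemble
  have hrw : (fun ω => rexp (-lam * ((∑ i, (W i ω) ^ 2) - (∑ i, W i ω) ^ 2 / (n + 1))))
      = fun ω => ∫ g, F g ω ∂(gaussianReal 0 1) := by
    funext ω
    exact (hstep2 ω).symm
  calc ∫ ω, rexp (-lam * ((∑ i, (W i ω) ^ 2) - (∑ i, W i ω) ^ 2 / (n + 1))) ∂P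
      = ∫ ω, ∫ g, F g ω ∂(gaussianReal 0 1) ∂P := by rw [hrw]
    _ = ∫ g, ∫ ω, F g ω ∂P ∂(gaussianReal 0 1) := (integral_integral_swap hFint).symm
    _ = ∫ g, rexp ((lam / (1 + 2 * lam)) * g ^ 2 + 0 * g) * (s⁻¹) ^ (n + 1)
          ∂(gaussianReal 0 1) := by
        refine integral_congr_ae (ae_of_all _ fun g => ?_)
        show (∫ ω, F g ω ∂P) = rexp ((lam / (1 + 2 * lam)) * g ^ 2 + 0 * g) * (s⁻¹) ^ (n + 1)
        rw [hstep1 g, hpt g]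
    _ = (∫ g, rexp ((lam / (1 + 2 * lam)) * g ^ 2 + 0 * g) ∂(gaussianReal 0 1))
          * (s⁻¹) ^ (n + 1) := integral_mul_const _ _
    _ = (s⁻¹) ^ n := by
        rw [my_gauss_mgf_quad hc2 0]
        rw [show (1 - 2 * (lam / (1 + 2 * lam))) = (1 + 2 * lam)⁻¹ from by
          field_simp; ring]
        rw [Real.sqrt_inv, ← hs_def]
        have hsne : s ≠ 0 := ne_of_gt hspos
        rw [pow_succ]
        field_simp
        rw [show (0:ℝ) ^ 2 * (1 + 2 * lam) / 2 = 0 by ring, Real.exp_zero, one_mul, pow_succ,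
          mul_comm, mul_assoc, one_div, inv_mul_cancel₀ hsne, mul_one]

/-- Let `X 0, …, X N` be `N + 1` i.i.d. samples from a Gaussian
distribution `N(m, σ²)` with `σ > 0`, let `μ̂` be the sample mean and
`σ̂² = (1/N) Σ_ℓ (X ℓ − μ̂)²` the unbiased sample variance.  Fix `δ ∈ (0,1)` and suppose
`N > 4 log(1/δ)`.  Then with probability at least `1 − δ`,
`σ² < σ̂² / (1 − 2 √(log(1/δ)/N))`. -/
theorem gaussian_variance_ucb
    {Ω : Type*} [MeasurableSpace Ω] (P : Measure Ω) [IsProbabilityMeasure P]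
    (N : ℕ) (m σ : ℝ) (hσ : 0 < σ)
    (X : Fin (N + 1) → Ω → ℝ) (hXmeas : ∀ ℓ, Measurable (X ℓ))
    (hindep : iIndepFun X P)
    (hgauss : ∀ ℓ, Measure.map (X ℓ) P = gaussianReal m (σ ^ 2).toNNReal)
    (muhat : Ω → ℝ) (hmuhat : ∀ ω, muhat ω = (∑ ℓ, X ℓ ω) / (N + 1))
    (vhat : Ω → ℝ) (hvhat : ∀ ω, vhat ω = (∑ ℓ, (X ℓ ω - muhat ω) ^ 2) / N)
    (δ : ℝ) (hδ : δ ∈ Set.Ioo (0 : ℝ) 1)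
    (hN : 4 * Real.log (1 / δ) < (N : ℝ)) :
    ENNReal.ofReal (1 - δ)
      ≤ P {ω | σ ^ 2 < vhat ω / (1 - 2 * Real.sqrt (Real.log (1 / δ) / N))} := by
  obtain ⟨hδ0, hδ1⟩ := hδ
  set t := Real.log (1 / δ) with ht_def
  have ht : 0 < t := Real.log_pos (by rw [lt_div_iff₀ hδ0]; linarith)
  have hNpos : (0:ℝ) < N := lt_trans (by positivity) hN
  have hσ2 : (0:ℝ) < σ ^ 2 := by positivity
  set lam := Real.sqrt (t / N) with hlam_def
  have hlam : 0 < lam := Real.sqrt_pos.2 (by positivity)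
  have hlam2 : lam ^ 2 = t / N := Real.sq_sqrt (by positivity)
  have hlamhalf : lam < 1 / 2 := by
    rw [hlam_def]
    refine (Real.sqrt_lt' (by norm_num)).2 ?_
    rw [div_lt_iff₀ hNpos]
    nlinarith
  have hc : 0 < 1 - 2 * lam := by linarith
  set W : Fin (N + 1) → Ω → ℝ := fun i ω => (X i ω - m) / σ with hW_def
  have hWmeas : ∀ i, Measurable (W i) := fun i =>
    ((hXmeas i).sub measurable_const).div_const σ
  have hWindep : iIndepFun W P :=
    hindep.comp (fun _ => fun y : ℝ => (y - m) / σ) (fun _ => by fun_prop)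
  have hWmap : ∀ i, Measure.map (W i) P = gaussianReal 0 1 := by
    intro i
    have hψ : W i = (fun y : ℝ => σ⁻¹ * y) ∘ ((fun y : ℝ => y + -m) ∘ X i) := by
      funext ω
      show (X i ω - m) / σ = σ⁻¹ * (X i ω + -m)
      rw [div_eq_inv_mul, sub_eq_add_neg]
    rw [hψ, ← Measure.map_map (by fun_prop) (by fun_prop),
      ← Measure.map_map (by fun_prop) (hXmeas i), hgauss i,
      gaussianReal_map_add_const, gaussianReal_map_const_mul]
    have hm0 : m + -m = 0 := by ring
    rw [hm0, mul_zero]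
    congr 1
    apply NNReal.coe_injective
    push_cast
    rw [Real.coe_toNNReal _ (sq_nonneg σ)]
    field_simp
  set S : Ω → ℝ := fun ω => ∑ i, W i ω with hS_def
  set V : Ω → ℝ := fun ω => (∑ i, (W i ω) ^ 2) - (S ω) ^ 2 / ((N:ℝ) + 1) with hV_def
  have hVmeas : Measurable V := by
    apply Measurable.sub
    · exact Finset.measurable_sum _ (fun i _ => (hWmeas i).pow_const 2)
    · exact ((Finset.measurable_sum _ (fun i _ => hWmeas i)).pow_const 2).div_const _
  have hVnonneg : ∀ ω, 0 ≤ V ω := by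
    intro ω
    have h := sq_sum_le_card_mul_sum_sq (s := Finset.univ) (f := fun i : Fin (N+1) => W i ω)
    have h' : (S ω) ^ 2 ≤ ((N:ℝ) + 1) * ∑ i, (W i ω) ^ 2 := by
      have hcard : ((Finset.univ : Finset (Fin (N+1))).card : ℝ) = (N:ℝ) + 1 := by
        rw [Finset.card_univ, Fintype.card_fin]; push_cast; ring
      calc (S ω) ^ 2 = (∑ i, W i ω) ^ 2 := rfl
        _ ≤ ((Finset.univ : Finset (Fin (N+1))).card : ℝ) * ∑ i, (W i ω) ^ 2 := by
            exact_mod_cast h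
        _ = ((N:ℝ) + 1) * ∑ i, (W i ω) ^ 2 := by rw [hcard]
    have hd : (S ω) ^ 2 / ((N:ℝ) + 1) ≤ ∑ i, (W i ω) ^ 2 := by
      rw [div_le_iff₀ (by positivity)]
      linarith [h']
    simp only [hV_def]
    linarith
  have hXW : ∀ (i : Fin (N+1)) ω, X i ω = m + σ * W i ω := by
    intro i ω
    show X i ω = m + σ * ((X i ω - m) / σ)
    field_simp
    ring
  have hsumX : ∀ ω, ∑ i, X i ω = ((N:ℝ) + 1) * m + σ * S ω := by
    intro ω
    calc ∑ i, X i ω = ∑ i : Fin (N+1), (m + σ * W i ω) :=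
          Finset.sum_congr rfl (fun i _ => hXW i ω)
      _ = ((N:ℝ) + 1) * m + σ * S ω := by
          rw [Finset.sum_add_distrib, Finset.sum_const, Finset.card_univ, Fintype.card_fin,
            ← Finset.mul_sum, nsmul_eq_mul]
          push_cast
          ring
  have hμm : ∀ ω, muhat ω = m + σ * S ω / ((N:ℝ) + 1) := by
    intro ω
    rw [hmuhat ω, hsumX ω]
    field_simp
  have hvhatV : ∀ ω, vhat ω = σ ^ 2 * V ω / N := by
    intro ω
    rw [hvhat ω]
    have hterm : ∀ i : Fin (N+1), (X i ω - muhat ω) ^ 2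
        = σ ^ 2 * (W i ω - S ω / ((N:ℝ) + 1)) ^ 2 := by
      intro i
      rw [hXW i ω, hμm ω,
        show m + σ * W i ω - (m + σ * S ω / ((N:ℝ) + 1))
          = σ * (W i ω - S ω / ((N:ℝ) + 1)) by ring, mul_pow]
    rw [Finset.sum_congr rfl (fun i _ => hterm i), ← Finset.mul_sum]
    have hkey : ∑ i, (W i ω - S ω / ((N:ℝ) + 1)) ^ 2 = V ω := by
      have expand : ∀ i : Fin (N+1), (W i ω - S ω / ((N:ℝ) + 1)) ^ 2
          = (W i ω) ^ 2 - (2 * S ω / ((N:ℝ) + 1)) * W i ω + (S ω / ((N:ℝ) + 1)) ^ 2 :=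
        fun i => by ring
      rw [Finset.sum_congr rfl (fun i _ => expand i), Finset.sum_add_distrib,
        Finset.sum_sub_distrib, ← Finset.mul_sum, Finset.sum_const, Finset.card_univ,
        Fintype.card_fin, nsmul_eq_mul]
      show _ = (∑ i, (W i ω) ^ 2) - (S ω) ^ 2 / ((N:ℝ) + 1)
      push_cast
      have hn1 : ((N:ℝ) + 1) ≠ 0 := by positivity
      field_simp
      ring
    rw [hkey]
  have hmgf : ∫ ω, rexp (-lam * V ω) ∂P = ((Real.sqrt (1 + 2 * lam))⁻¹) ^ N :=
    my_mgf_core P N W hWmeas hWindep hWmap hlam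
  have hVint : Integrable (fun ω => rexp (-lam * V ω)) P := by
    refine (integrable_const (1:ℝ)).mono'
      ((hVmeas.const_mul (-lam)).exp).aestronglyMeasurable (ae_of_all _ fun ω => ?_)
    rw [Real.norm_eq_abs, abs_of_pos (Real.exp_pos _), Real.exp_le_one_iff]
    have := hVnonneg ω
    nlinarith
  have hcher := measure_le_le_exp_mul_mgf (μ := P) (X := V) ((1 - 2 * lam) * N)
    (t := -lam) (by linarith) hVint
  have hmgfval : mgf V P (-lam) = ((Real.sqrt (1 + 2 * lam))⁻¹) ^ N := by
    unfold mgf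
    exact hmgf
  have hR : (Real.sqrt (1 + 2 * lam))⁻¹ ≤ rexp (lam ^ 2 - lam) := by
    have h1 : rexp (2 * lam - (2 * lam) ^ 2 / 2) ≤ 1 + 2 * lam :=
      my_exp_ineq (by linarith) (by linarith)
    have key : rexp (2 * lam - (2 * lam) ^ 2 / 2) = (rexp (lam - lam ^ 2)) ^ 2 := by
      rw [show 2 * lam - (2 * lam) ^ 2 / 2 = (lam - lam ^ 2) + (lam - lam ^ 2) by ring,
        Real.exp_add]
      ring
    rw [key] at h1
    have h2 : rexp (lam - lam ^ 2) ≤ Real.sqrt (1 + 2 * lam) := by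
      have := Real.sqrt_le_sqrt h1
      rwa [Real.sqrt_sq (Real.exp_nonneg _)] at this
    have h3 : (Real.sqrt (1 + 2 * lam))⁻¹ ≤ (rexp (lam - lam ^ 2))⁻¹ :=
      inv_anti₀ (Real.exp_pos _) h2
    rw [← Real.exp_neg] at h3
    convert h3 using 2
    ring
  have hRN : ((Real.sqrt (1 + 2 * lam))⁻¹) ^ N ≤ rexp ((lam ^ 2 - lam) * N) := by
    calc ((Real.sqrt (1 + 2 * lam))⁻¹) ^ N ≤ (rexp (lam ^ 2 - lam)) ^ N :=
          pow_le_pow_left₀ (by positivity) hR N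
      _ = rexp ((lam ^ 2 - lam) * N) := by rw [← Real.exp_nat_mul, mul_comm]
  have hPbad : (P {ω | V ω ≤ (1 - 2 * lam) * N}).toReal ≤ δ := by
    refine hcher.trans ?_
    calc rexp (-(-lam) * ((1 - 2 * lam) * N)) * mgf V P (-lam)
        = rexp (lam * (1 - 2 * lam) * N) * ((Real.sqrt (1 + 2 * lam))⁻¹) ^ N := by
          rw [hmgfval, show -(-lam) * ((1 - 2 * lam) * (N:ℝ)) = lam * (1 - 2 * lam) * (N:ℝ)
            by ring]
      _ ≤ rexp (lam * (1 - 2 * lam) * N) * rexp ((lam ^ 2 - lam) * N) :=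
          mul_le_mul_of_nonneg_left hRN (Real.exp_nonneg _)
      _ = rexp (-(lam ^ 2 * N)) := by
          rw [← Real.exp_add]
          congr 1
          ring
      _ = rexp (-t) := by
          rw [show lam ^ 2 * (N:ℝ) = t from by rw [hlam2]; field_simp]
      _ = δ := by
          rw [ht_def, one_div, Real.log_inv, neg_neg, Real.exp_log hδ0]
  have hsetid : {ω | σ ^ 2 < vhat ω / (1 - 2 * Real.sqrt (t / (N:ℝ)))}
      = {ω | V ω ≤ (1 - 2 * lam) * N}ᶜ := by
    ext ω
    simp only [Set.mem_setOf_eq, Set.mem_compl_iff, not_le, ← hlam_def]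
    rw [lt_div_iff₀ hc, hvhatV ω, lt_div_iff₀ hNpos]
    constructor <;> intro h <;> nlinarith [hσ2]
  have hbadmeas : MeasurableSet {ω | V ω ≤ (1 - 2 * lam) * N} :=
    measurableSet_le hVmeas measurable_const
  rw [hsetid, measure_compl hbadmeas (measure_ne_top _ _), measure_univ]
  have h1 : P {ω | V ω ≤ (1 - 2 * lam) * N} ≤ ENNReal.ofReal δ := by
    rw [← ENNReal.ofReal_toReal (measure_ne_top P _)]
    exact ENNReal.ofReal_le_ofReal hPbad
  calc ENNReal.ofReal (1 - δ) = 1 - ENNReal.ofReal δ := by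
        rw [ENNReal.ofReal_sub _ hδ0.le, ENNReal.ofReal_one]
    _ ≤ 1 - P {ω | V ω ≤ (1 - 2 * lam) * N} := tsub_le_tsub_left h1 1
end

section
/- Fix a stage s of sequential halving with surviving arm set A_s containing the best arm 1, where arm means satisfy μ_1 > μ_i for a suboptimal arm i ∈ A_s, all rewards are Gaussian with variances σ_j² > 0, the per-stage budget is n_s, and each arm j ∈ A_s is pulled exactly N_{s,j} = (σ_j² / Σ_{k∈A_s} σ_k²) · n_s times (assumed a positive integer). Let μ̂_{s,j} be the empirical mean of the N_{s,j} i.i.d. N(μ_j, σ_j²) observations of arm j, with all observations independent. Then P(μ̂_{s,i} ≥ μ̂_{s,1}) ≤ exp( − n_s Δ_i² / (4 Σ_{j∈A_s} σ_j²) ), where Δ_i = μ_1 − μ_i. -/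
open MeasureTheory ProbabilityTheory Real Finset
open scoped NNReal ENNReal

lemma gaussian_exp_tilt (m : ℝ) (w : ℝ≥0) (hw : w ≠ 0) (t x : ℝ) :
    rexp (t * x) * gaussianPDFReal m w x
      = rexp (t * m + t ^ 2 * w / 2) * gaussianPDFReal (m + t * w) w x := by
  have hw' : (0:ℝ) < (w:ℝ) := lt_of_le_of_ne w.coe_nonneg (by exact_mod_cast (Ne.symm hw))
  simp only [gaussianPDFReal]
  rw [mul_left_comm, ← Real.exp_add, mul_left_comm, ← Real.exp_add]
  congr 1
  field_simp
  ring

lemma exp_mul_gaussianPDFReal_integrable (m : ℝ) (w : ℝ≥0) (hw : w ≠ 0) (t : ℝ) :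
    Integrable (fun x => rexp (t * x) * gaussianPDFReal m w x) := by
  have := (integrable_gaussianPDFReal (m + t * w) w).const_mul (rexp (t * m + t ^ 2 * w / 2))
  refine this.congr ?_
  filter_upwards with x
  exact (gaussian_exp_tilt m w hw t x).symm

lemma integrable_exp_gaussianReal (m : ℝ) {w : ℝ≥0} (hw : w ≠ 0) (t : ℝ) :
    Integrable (fun x => rexp (t * x)) (gaussianReal m w) := by
  rw [gaussianReal_of_var_ne_zero m hw]
  rw [integrable_withDensity_iff (measurable_gaussianPDF m w) (by
    filter_upwards with x; exact ENNReal.ofReal_lt_top)]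
  refine (exp_mul_gaussianPDFReal_integrable m w hw t).congr ?_
  filter_upwards with x
  rw [gaussianPDF, ENNReal.toReal_ofReal (gaussianPDFReal_nonneg m w x)]

lemma integral_exp_gaussianReal (m : ℝ) {w : ℝ≥0} (hw : w ≠ 0) (t : ℝ) :
    ∫ x, rexp (t * x) ∂(gaussianReal m w) = rexp (t * m + t ^ 2 * w / 2) := by
  rw [gaussianReal_of_var_ne_zero m hw]
  have hmeas : Measurable fun x => (gaussianPDFReal m w x).toNNReal :=
    (measurable_gaussianPDFReal m w).real_toNNReal
  have hd : gaussianPDF m w = fun x => ((gaussianPDFReal m w x).toNNReal : ℝ≥0∞) := rfl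
  rw [hd, integral_withDensity_eq_integral_smul hmeas]
  have : ∀ x, (gaussianPDFReal m w x).toNNReal • rexp (t * x)
      = rexp (t * x) * gaussianPDFReal m w x := by
    intro x
    simp [NNReal.smul_def, Real.coe_toNNReal _ (gaussianPDFReal_nonneg m w x), mul_comm]
  simp_rw [this]
  simp_rw [gaussian_exp_tilt m w hw t]
  rw [integral_const_mul, integral_gaussianPDFReal_eq_one (m + t * w) hw, mul_one]

/-- Fix a stage of sequential halving with surviving arm set `A`
containing the best arm `i₀`, and a suboptimal arm `i ∈ A` with `μ i < μ i₀`.  All rewards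
are Gaussian: the observations `Y (j, ℓ)` are jointly independent with
`Y (j, ℓ) ∼ N(μ j, v j)` where `v j = σ_j² > 0`.  Each arm `j ∈ A` is pulled exactly
`Nn j = (v j / Σ_{k∈A} v k) · ns` times (a positive integer), and `μ̂ j` is the empirical
mean of its `Nn j` observations.  Then
`P(μ̂ i ≥ μ̂ i₀) ≤ exp(− ns Δ_i² / (4 Σ_{j∈A} v j))` with `Δ_i = μ i₀ − μ i`. -/
theorem shvar_stage_comparison_error_bound
    {Ω : Type*} [MeasurableSpace Ω] (P : Measure Ω) [IsProbabilityMeasure P]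
    {ι : Type*} [DecidableEq ι] (A : Finset ι)
    (μ v : ι → ℝ) (hv : ∀ j ∈ A, 0 < v j)
    (i₀ : ι) (hi₀ : i₀ ∈ A) (i : ι) (hi : i ∈ A) (hgap : μ i < μ i₀)
    (ns : ℕ)
    (Nn : ι → ℕ)
    (hNn : ∀ j ∈ A, 0 < Nn j ∧ (Nn j : ℝ) = v j / (∑ k ∈ A, v k) * ns)
    (Y : ι × ℕ → Ω → ℝ) (hYmeas : ∀ p, Measurable (Y p))
    (hindep : iIndepFun Y P)
    (hgauss : ∀ j ∈ A, ∀ ℓ : ℕ, Measure.map (Y (j, ℓ)) P = gaussianReal (μ j) (v j).toNNReal)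
    (muhat : ι → Ω → ℝ)
    (hmuhat : ∀ j ∈ A, ∀ ω, muhat j ω = (∑ ℓ ∈ Finset.range (Nn j), Y (j, ℓ) ω) / Nn j) :
    P {ω | muhat i₀ ω ≤ muhat i ω}
      ≤ ENNReal.ofReal
          (Real.exp (-(ns * (μ i₀ - μ i) ^ 2) / (4 * ∑ j ∈ A, v j))) := by
  classical
  have hS : 0 < ∑ k ∈ A, v k := Finset.sum_pos hv ⟨i₀, hi₀⟩
  set S : ℝ := ∑ k ∈ A, v k with hSdef
  obtain ⟨hNipos, hNi⟩ := hNn i hi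
  obtain ⟨hN0pos, hN0⟩ := hNn i₀ hi₀
  have hne : i ≠ i₀ := fun h => lt_irrefl _ (h ▸ hgap)
  have hNi' : (0:ℝ) < Nn i := Nat.cast_pos.mpr hNipos
  have hN0' : (0:ℝ) < Nn i₀ := Nat.cast_pos.mpr hN0pos
  have hns : (0:ℝ) < ns := by
    rcases Nat.eq_zero_or_pos ns with h | h
    · subst h; simp at hN0; exact absurd hN0 hN0pos.ne'
    · exact_mod_cast h
  have hΔ : 0 < μ i₀ - μ i := sub_pos.mpr hgap
  set t₀ : ℝ := (μ i₀ - μ i) * ns / (2 * S) with ht₀def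
  have ht₀ : 0 ≤ t₀ := le_of_lt (by rw [ht₀def]; positivity)
  set c : ι × ℕ → ℝ := fun p =>
    if p.1 = i then ((Nn i : ℝ))⁻¹ else if p.1 = i₀ then -((Nn i₀ : ℝ))⁻¹ else 0 with hcdef
  set X : ι × ℕ → Ω → ℝ := fun p => (fun x => c p * x) ∘ Y p with hXdef
  have hXmeas : ∀ p, Measurable (X p) := fun p => (measurable_id.const_mul (c p)).comp (hYmeas p)
  have hXindep : iIndepFun X P :=
    hindep.comp (fun p x => c p * x) (fun p => measurable_id.const_mul (c p))
  set T : Finset (ι × ℕ) :=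
    (({i} : Finset ι) ×ˢ Finset.range (Nn i)) ∪ (({i₀} : Finset ι) ×ˢ Finset.range (Nn i₀))
    with hTdef
  have hdisj : Disjoint (({i} : Finset ι) ×ˢ Finset.range (Nn i))
      (({i₀} : Finset ι) ×ˢ Finset.range (Nn i₀)) := by
    refine Finset.disjoint_left.mpr ?_
    rintro ⟨a, b⟩ h1 h2
    simp only [Finset.mem_product, Finset.mem_singleton] at h1 h2
    exact hne (by rw [← h1.1, h2.1])
  have hci : ∀ ℓ : ℕ, c (i, ℓ) = ((Nn i : ℝ))⁻¹ := fun ℓ => if_pos rfl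
  have hc0 : ∀ ℓ : ℕ, c (i₀, ℓ) = -((Nn i₀ : ℝ))⁻¹ := fun ℓ => by
    show (if i₀ = i then _ else if i₀ = i₀ then _ else _) = _
    rw [if_neg (Ne.symm hne), if_pos rfl]
  have hcT : ∀ p ∈ T, p.1 ∈ A := by
    intro p hp
    rcases Finset.mem_union.mp hp with h | h <;>
      simp only [Finset.mem_product, Finset.mem_singleton] at h
    · rw [h.1]; exact hi
    · rw [h.1]; exact hi₀
  have hcne : ∀ p ∈ T, c p ≠ 0 := by
    intro p hp
    rcases Finset.mem_union.mp hp with h | h <;>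
      simp only [Finset.mem_product, Finset.mem_singleton] at h
    · obtain ⟨h1, -⟩ := h
      rw [show p = (p.1, p.2) from rfl, h1, hci]
      exact inv_ne_zero hNi'.ne'
    · obtain ⟨h1, -⟩ := h
      rw [show p = (p.1, p.2) from rfl, h1, hc0]
      exact neg_ne_zero.mpr (inv_ne_zero hN0'.ne')
  -- law of each X p
  have hlaw : ∀ p ∈ T, Measure.map (X p) P
      = gaussianReal (c p * μ p.1) ((⟨(c p)^2, sq_nonneg _⟩ * (v p.1).toNNReal : ℝ≥0)) := by
    intro p hp
    rw [hXdef]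
    show Measure.map ((fun x => c p * x) ∘ Y p) P = _
    rw [← Measure.map_map (measurable_const_mul (c p)) (hYmeas p),
      show Y p = Y (p.1, p.2) from rfl, hgauss p.1 (hcT p hp) p.2]
    exact gaussianReal_map_const_mul (c p)
  have hwne : ∀ p ∈ T, ((⟨(c p)^2, sq_nonneg _⟩ * (v p.1).toNNReal : ℝ≥0)) ≠ 0 := by
    intro p hp
    refine mul_ne_zero ?_ ?_
    · intro h
      have h2 : (c p)^2 = 0 := congrArg NNReal.toReal h
      exact hcne p hp (pow_eq_zero_iff (by norm_num : (2:ℕ) ≠ 0) |>.mp h2)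
    · intro h
      exact absurd (Real.toNNReal_eq_zero.mp h) (not_le.mpr (hv _ (hcT p hp)))
  have hexpcont : Continuous fun x : ℝ => rexp (t₀ * x) :=
    Real.continuous_exp.comp (continuous_const.mul continuous_id)
  have key : ∀ p ∈ T, Integrable (fun ω => rexp (t₀ * X p ω)) P ∧
      mgf (X p) P t₀
        = rexp (t₀ * (c p * μ p.1) + t₀ ^ 2 * ((c p)^2 * v p.1) / 2) := by
    intro p hp
    have hmapint := integrable_exp_gaussianReal (c p * μ p.1) (hwne p hp) t₀
    have haes : AEStronglyMeasurable (fun x => rexp (t₀ * x)) (Measure.map (X p) P) :=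
      hexpcont.aestronglyMeasurable
    constructor
    · have := (integrable_map_measure haes (hXmeas p).aemeasurable).mp
        (by rw [hlaw p hp]; exact hmapint)
      exact this
    · have hcoe : ((⟨(c p)^2, sq_nonneg _⟩ * (v p.1).toNNReal : ℝ≥0) : ℝ)
          = (c p)^2 * v p.1 := by
        show (c p)^2 * ((v p.1).toNNReal : ℝ) = _
        rw [Real.coe_toNNReal _ (hv _ (hcT p hp)).le]
      rw [mgf, ← integral_map (hXmeas p).aemeasurable haes, hlaw p hp,
        integral_exp_gaussianReal _ (hwne p hp) t₀, hcoe]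
  have hmgfZ : mgf (∑ p ∈ T, X p) P t₀
      = rexp (∑ p ∈ T, (t₀ * (c p * μ p.1) + t₀ ^ 2 * ((c p)^2 * v p.1) / 2)) := by
    rw [hXindep.mgf_sum hXmeas T, Real.exp_sum]
    exact Finset.prod_congr rfl fun p hp => (key p hp).2
  have hintZ : Integrable (fun ω => rexp (t₀ * (∑ p ∈ T, X p) ω)) P :=
    hXindep.integrable_exp_mul_sum hXmeas (fun p hp => (key p hp).1)
  have hsum : ∑ p ∈ T, (t₀ * (c p * μ p.1) + t₀ ^ 2 * ((c p)^2 * v p.1) / 2)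
      = -(ns * (μ i₀ - μ i) ^ 2) / (4 * S) := by
    rw [hTdef, Finset.sum_union hdisj, Finset.sum_product, Finset.sum_product,
      Finset.sum_singleton, Finset.sum_singleton]
    simp only [hci, hc0]
    rw [Finset.sum_const, Finset.sum_const, Finset.card_range, Finset.card_range,
      nsmul_eq_mul, nsmul_eq_mul, hNi, hN0, ht₀def]
    have h1 : v i ≠ 0 := (hv i hi).ne'
    have h2 : v i₀ ≠ 0 := (hv i₀ hi₀).ne'
    have h3 : S ≠ 0 := hS.ne'
    have h4 : (ns : ℝ) ≠ 0 := hns.ne'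
    field_simp
    ring
  have hset : {ω | muhat i₀ ω ≤ muhat i ω} = {ω | (0:ℝ) ≤ (∑ p ∈ T, X p) ω} := by
    ext ω
    simp only [Set.mem_setOf_eq]
    have hZω : (∑ p ∈ T, X p) ω = muhat i ω - muhat i₀ ω := by
      rw [Finset.sum_apply, hTdef, Finset.sum_union hdisj, Finset.sum_product,
        Finset.sum_product, Finset.sum_singleton, Finset.sum_singleton]
      have hXi : ∀ ℓ, X (i, ℓ) ω = ((Nn i : ℝ))⁻¹ * Y (i, ℓ) ω := fun ℓ => by
        rw [hXdef]; simp only [Function.comp_apply]; rw [hci]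
      have hX0 : ∀ ℓ, X (i₀, ℓ) ω = -((Nn i₀ : ℝ))⁻¹ * Y (i₀, ℓ) ω := fun ℓ => by
        rw [hXdef]; simp only [Function.comp_apply]; rw [hc0]
      simp only [hXi, hX0]
      rw [← Finset.mul_sum, ← Finset.mul_sum, hmuhat i hi ω, hmuhat i₀ hi₀ ω,
        div_eq_inv_mul, div_eq_inv_mul]
      ring
    rw [hZω]
    exact ⟨fun h => sub_nonneg.mpr h, fun h => sub_nonneg.mp h⟩
  have hch := measure_ge_le_exp_mul_mgf (X := ∑ p ∈ T, X p) (μ := P) (t := t₀) 0 ht₀ hintZ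
  rw [mul_zero, Real.exp_zero, one_mul] at hch
  rw [hset, ENNReal.le_ofReal_iff_toReal_le (measure_ne_top P _) (Real.exp_nonneg _)]
  calc (P {ω | (0:ℝ) ≤ (∑ p ∈ T, X p) ω}).toReal
      ≤ mgf (∑ p ∈ T, X p) P t₀ := hch
    _ = rexp (∑ p ∈ T, (t₀ * (c p * μ p.1) + t₀ ^ 2 * ((c p)^2 * v p.1) / 2)) := hmgfZ
    _ = rexp (-(ns * (μ i₀ - μ i) ^ 2) / (4 * S)) := by rw [hsum]
end

section
/- Consider one stage of SHVar's allocation: a finite set A of k arms with positive variances σ_i², budget n_s rounds, where in each round t ∈ {1,…,n_s} the pulled arm I_t is any arm maximizing σ_i²/N_{t,i} over i ∈ A, with N_{t,i} the number of pulls of arm i before round t (convention σ_i²/0 = +∞). Let σ_max² = max_{i∈A} σ_i² and let N_i be the total number of pulls of arm i after the n_s rounds. Then for every arm i ∈ A, N_i ≥ (σ_i²/σ_max²) · (n_s/k − 1). -/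
open Finset
open scoped ENNReal NNReal

/-- One stage of `SHVar`'s allocation: a finite type of `k` arms with
positive variances `v i = σ_i²`, budget `ns` rounds, where in each round `t < ns` the
pulled arm `I t` maximizes `v i / N t i` (pull counts `N t i = #{ℓ < t : I ℓ = i}`, with
the convention `x / 0 = ∞`, expressed in `ℝ≥0∞`).  With `σ_max² = max_i v i`, the total
number of pulls of every arm `i` satisfies `N_i ≥ (v i / σ_max²) · (ns / k − 1)`. -/
theorem shvar_stage_pull_lower_bound
    {ι : Type*} [Fintype ι] [DecidableEq ι] [Nonempty ι]
    (k : ℕ) (hk : Fintype.card ι = k)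
    (v : ι → ℝ) (hv : ∀ i, 0 < v i)
    (vmax : ℝ) (hvmax : IsGreatest (Set.range v) vmax)
    (ns : ℕ) (I : ℕ → ι)
    (N : ℕ → ι → ℕ)
    (hN : ∀ t i, N t i = ((Finset.range t).filter (fun ℓ => I ℓ = i)).card)
    (hgreedy : ∀ t < ns, ∀ j : ι,
      ENNReal.ofReal (v j) / (N t j : ℝ≥0∞)
        ≤ ENNReal.ofReal (v (I t)) / (N t (I t) : ℝ≥0∞)) :
    ∀ i : ι, (N ns i : ℝ) ≥ v i / vmax * ((ns : ℝ) / k - 1) := by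
  intro i
  obtain ⟨⟨jm, hjm⟩, hub⟩ := hvmax
  have hvmaxpos : 0 < vmax := hjm ▸ hv jm
  have hkpos : 0 < k := hk ▸ Fintype.card_pos
  have hkR : (0:ℝ) < k := by exact_mod_cast hkpos
  by_cases hns : (ns : ℝ) / k - 1 ≤ 0
  · have : v i / vmax * ((ns:ℝ)/k - 1) ≤ 0 :=
      mul_nonpos_of_nonneg_of_nonpos (div_nonneg (hv i).le hvmaxpos.le) hns
    exact le_trans this (Nat.cast_nonneg _)
  push_neg at hns
  -- sum of pulls equals ns
  have hsum : ∑ a, N ns a = ns := by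
    simp only [hN]
    rw [← Finset.card_eq_sum_card_fiberwise (fun x _ => Finset.mem_univ (I x)),
      Finset.card_range]
  -- pick the most pulled arm
  obtain ⟨j, -, hjmax⟩ := Finset.exists_max_image (Finset.univ : Finset ι) (N ns)
    Finset.univ_nonempty
  have hle : ns ≤ k * N ns j := by
    calc ns = ∑ a, N ns a := hsum.symm
    _ ≤ Finset.univ.card • N ns j :=
        Finset.sum_le_card_nsmul _ _ _ (fun x _ => hjmax x (Finset.mem_univ x))
    _ = k * N ns j := by rw [smul_eq_mul, Finset.card_univ, hk]
  have hNj : (ns : ℝ) / k ≤ N ns j := by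
    rw [div_le_iff₀ hkR]
    have : (ns:ℝ) ≤ (k:ℝ) * N ns j := by exact_mod_cast hle
    linarith
  have hNj1 : 1 ≤ N ns j := by
    have : (1:ℝ) < N ns j := by linarith
    exact_mod_cast this.le
  -- last pull time of arm j
  set s : Finset ℕ := (Finset.range ns).filter (fun ℓ => I ℓ = j) with hs
  have hscard : s.card = N ns j := (hN ns j).symm
  have hne : s.Nonempty := Finset.card_pos.mp (by omega)
  set t := s.max' hne with htdef
  have hts : t ∈ s := Finset.max'_mem s hne
  have htns : t < ns := (Finset.mem_filter.mp hts).1 |> Finset.mem_range.mp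
  have hIt : I t = j := (Finset.mem_filter.mp hts).2
  have hset : (Finset.range t).filter (fun ℓ => I ℓ = j) = s.erase t := by
    ext ℓ
    simp only [Finset.mem_filter, Finset.mem_range, Finset.mem_erase, hs]
    constructor
    · rintro ⟨h1, h2⟩
      exact ⟨h1.ne, h1.trans htns, h2⟩
    · rintro ⟨hne', h1, h2⟩
      have : ℓ ≤ t := Finset.le_max' s ℓ (by simp [hs, h1, h2])
      exact ⟨lt_of_le_of_ne this hne', h2⟩
  have hNtj : N t j = N ns j - 1 := by
    rw [hN t j, hset, Finset.card_erase_of_mem hts, hscard]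
  have hNtjR : (N t j : ℝ) = (N ns j : ℝ) - 1 := by
    rw [hNtj]; push_cast [hNj1]; ring
  have hNtjpos : (0:ℝ) < N t j := by rw [hNtjR]; linarith
  have hNtj0 : (N t j : ℝ≥0∞) ≠ 0 := by
    exact_mod_cast (by exact_mod_cast hNtjpos : (0:ℕ) < N t j).ne'
  -- greedy at time t
  have hg := hgreedy t htns i
  rw [hIt] at hg
  have hrhs_ne : ENNReal.ofReal (v j) / (N t j : ℝ≥0∞) ≠ ⊤ :=
    (ENNReal.div_lt_top ENNReal.ofReal_ne_top hNtj0).ne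
  have hNti0 : N t i ≠ 0 := by
    intro h0
    rw [h0] at hg
    simp only [Nat.cast_zero] at hg
    rw [ENNReal.div_zero (ENNReal.ofReal_pos.mpr (hv i)).ne'] at hg
    exact hrhs_ne (top_le_iff.mp hg)
  have hNtipos : (0:ℝ) < N t i := by exact_mod_cast Nat.pos_of_ne_zero hNti0
  have hreal : v i / (N t i : ℝ) ≤ v j / (N t j : ℝ) := by
    have := ENNReal.toReal_mono hrhs_ne hg
    simpa [ENNReal.toReal_div, ENNReal.toReal_ofReal (hv i).le,
      ENNReal.toReal_ofReal (hv j).le] using this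
  have hcross : v i * (N t j : ℝ) ≤ v j * (N t i : ℝ) :=
    (div_le_div_iff₀ hNtipos hNtjpos).mp hreal
  have hvjle : v j ≤ vmax := hub ⟨j, rfl⟩
  have hmono : (N t i : ℝ) ≤ (N ns i : ℝ) := by
    have : N t i ≤ N ns i := by
      rw [hN t i, hN ns i]
      exact Finset.card_le_card (Finset.filter_subset_filter _
        (Finset.range_subset_range.mpr htns.le))
    exact_mod_cast this
  have hb : (ns:ℝ)/k - 1 ≤ (N t j : ℝ) := by rw [hNtjR]; linarith
  have key : v i / vmax * ((ns:ℝ)/k - 1) ≤ (N t i : ℝ) := by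
    rw [div_mul_eq_mul_div, div_le_iff₀ hvmaxpos]
    nlinarith [mul_le_mul_of_nonneg_left hb (hv i).le,
      mul_le_mul_of_nonneg_right hvjle hNtipos.le]
  linarith
end

section
/- Consider a greedy sequential allocation over a finite set A of k arms with budget n rounds: given arbitrary positive weights U_{t,i} > 0 for each round t ∈ {1,…,n} and arm i ∈ A, in each round t the pulled arm I_t is any arm maximizing U_{t,i}/N_{t,i} over i ∈ A, where N_{t,i} is the number of pulls of arm i before round t (convention U_{t,i}/0 = +∞). Let N_i be the total pulls of arm i, let J be an arm with maximal total pulls N_J, and let ℓ be the last round with I_ℓ = J. Then for every arm i ∈ A, N_i ≥ (U_{ℓ,i}/U_{ℓ,J}) · (n/k − 1). -/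
open Finset
open scoped ENNReal NNReal

/-- Greedy sequential allocation over a finite type of `k` arms with
budget `n` rounds and time-varying positive weights `U t i`: in each round `t < n` the
pulled arm `I t` maximizes `U t i / N t i`, where `N t i = #{ℓ < t : I ℓ = i}` is the
number of pulls of arm `i` before round `t` (convention `x / 0 = ∞`, in `ℝ≥0∞`).
If `J` is an arm with maximal total pulls and `ℓ` is the last round with `I ℓ = J`, then
every arm `i` satisfies `N_i ≥ (U ℓ i / U ℓ J) · (n / k − 1)`. -/
theorem greedy_allocation_pull_lower_bound
    {ι : Type*} [Fintype ι] [DecidableEq ι] [Nonempty ι]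
    (k : ℕ) (hk : Fintype.card ι = k)
    (n : ℕ) (U : ℕ → ι → ℝ) (hU : ∀ t i, 0 < U t i)
    (I : ℕ → ι)
    (N : ℕ → ι → ℕ)
    (hN : ∀ t i, N t i = ((Finset.range t).filter (fun m => I m = i)).card)
    (hgreedy : ∀ t < n, ∀ j : ι,
      ENNReal.ofReal (U t j) / (N t j : ℝ≥0∞)
        ≤ ENNReal.ofReal (U t (I t)) / (N t (I t) : ℝ≥0∞))
    (J : ι) (hJ : ∀ i : ι, N n i ≤ N n J)
    (l : ℕ) (hl : l < n) (hlJ : I l = J)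
    (hlast : ∀ t, l < t → t < n → I t ≠ J) :
    ∀ i : ι, (N n i : ℝ) ≥ U l i / U l J * ((n : ℝ) / k - 1) := by
  intro i
  have hk0 : 0 < k := by rw [← hk]; exact Fintype.card_pos
  have hUi := hU l i
  have hUJ := hU l J
  have hratio_nonneg : 0 ≤ U l i / U l J := le_of_lt (div_pos hUi hUJ)
  -- sum of pulls = n
  have hsum : ∑ j : ι, N n j = n := by
    simp only [hN]
    have := Finset.card_eq_sum_card_fiberwise
      (f := I) (s := Finset.range n) (t := Finset.univ) (fun x _ => Finset.mem_univ _)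
    simpa using this.symm
  -- n ≤ k * N n J
  have hnk : n ≤ k * N n J := by
    calc n = ∑ j : ι, N n j := hsum.symm
    _ ≤ ∑ _j : ι, N n J := Finset.sum_le_sum (fun j _ => hJ j)
    _ = k * N n J := by rw [Finset.sum_const, Finset.card_univ, hk, smul_eq_mul]
  -- N n J = N l J + 1
  have hNnJ : N n J = N l J + 1 := by
    rw [hN, hN]
    have hfe : (Finset.range n).filter (fun m => I m = J)
        = (Finset.range (l+1)).filter (fun m => I m = J) := by
      apply Finset.ext
      intro m
      simp only [Finset.mem_filter, Finset.mem_range]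
      constructor
      · rintro ⟨hm, hmJ⟩
        refine ⟨?_, hmJ⟩
        by_contra h
        exact hlast m (by omega) hm hmJ
      · rintro ⟨hm, hmJ⟩; exact ⟨by omega, hmJ⟩
    rw [hfe, Finset.range_add_one, Finset.filter_insert, if_pos hlJ,
      Finset.card_insert_of_notMem (by simp)]
  -- monotonicity: N l i ≤ N n i
  have hmono : N l i ≤ N n i := by
    rw [hN, hN]
    exact Finset.card_le_card (Finset.filter_subset_filter _
      (Finset.range_subset_range.mpr (le_of_lt hl)))
  rcases Nat.eq_zero_or_pos (N l J) with h0 | hpos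
  · -- then N n J = 1, so n ≤ k, RHS ≤ 0
    have hn1 : N n J = 1 := by omega
    rw [hn1, mul_one] at hnk
    have : (n : ℝ) / k - 1 ≤ 0 := by
      rw [sub_nonpos, div_le_one (by exact_mod_cast hk0)]
      exact_mod_cast hnk
    calc U l i / U l J * ((n : ℝ) / k - 1) ≤ 0 :=
          mul_nonpos_of_nonneg_of_nonpos hratio_nonneg this
      _ ≤ (N n i : ℝ) := Nat.cast_nonneg _
  · -- greedy inequality at round l
    have hg := hgreedy l hl i
    rw [hlJ] at hg
    have hNli : 0 < N l i := by
      by_contra h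
      push_neg at h
      have h' : N l i = 0 := by omega
      rw [h'] at hg
      simp only [Nat.cast_zero, ENNReal.div_zero (by positivity : ENNReal.ofReal (U l i) ≠ 0)] at hg
      have : ENNReal.ofReal (U l J) / (N l J : ℝ≥0∞) ≠ ⊤ := by
        exact ne_of_lt (ENNReal.div_lt_top (by simp) (by exact_mod_cast hpos.ne'))
      exact this (top_le_iff.mp hg)
    -- convert to real inequality
    have hreal : U l i / (N l i : ℝ) ≤ U l J / (N l J : ℝ) := by
      have e1 : ENNReal.ofReal (U l i) / (N l i : ℝ≥0∞)
          = ENNReal.ofReal (U l i / (N l i : ℝ)) := by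
        rw [ENNReal.ofReal_div_of_pos (by exact_mod_cast hNli), ENNReal.ofReal_natCast]
      have e2 : ENNReal.ofReal (U l J) / (N l J : ℝ≥0∞)
          = ENNReal.ofReal (U l J / (N l J : ℝ)) := by
        rw [ENNReal.ofReal_div_of_pos (by exact_mod_cast hpos), ENNReal.ofReal_natCast]
      rw [e1, e2, ENNReal.ofReal_le_ofReal_iff (by positivity)] at hg
      exact hg
    have hcross : U l i / U l J * (N l J : ℝ) ≤ (N l i : ℝ) := by
      rw [div_le_div_iff₀ (by exact_mod_cast hNli) (by exact_mod_cast hpos)] at hreal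
      rw [div_mul_eq_mul_div, div_le_iff₀ hUJ]
      linarith [hreal]
    have hNlJ : (n : ℝ) / k - 1 ≤ (N l J : ℝ) := by
      rw [sub_le_iff_le_add, div_le_iff₀ (by exact_mod_cast hk0)]
      have : (n : ℝ) ≤ (k : ℝ) * (N n J : ℝ) := by exact_mod_cast hnk
      rw [hNnJ] at this
      push_cast at this ⊢
      linarith
    calc U l i / U l J * ((n : ℝ) / k - 1)
        ≤ U l i / U l J * (N l J : ℝ) := by
          exact mul_le_mul_of_nonneg_left hNlJ hratio_nonneg
      _ ≤ (N l i : ℝ) := hcross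
      _ ≤ (N n i : ℝ) := by exact_mod_cast hmono
end

section
/- Consider a greedy sequential allocation over a finite set A of k arms with budget n rounds and positive weights U_{t,i} > 0, where in each round t the pulled arm I_t is any arm maximizing U_{t,i}/N_{t,i} (convention U/0 = +∞), N_{t,i} being the pulls of arm i before round t. Let σ_i² > 0 for i ∈ A, σ_max² = max_{i∈A} σ_i², and δ ∈ (0,1). Let J be an arm with maximal total pulls and ℓ the last round with I_ℓ = J, and suppose: (a) U_{ℓ,i} ≥ σ_i² for all i ∈ A; (b) U_{ℓ,J} ≤ σ_J² · (1 + 2√(log(1/δ)/(N_{ℓ,J} − 1)) + 2 log(1/δ)/(N_{ℓ,J} − 1)) / (1 − 2√(log(1/δ)/(N_{ℓ,J} − 1))); and (c) N_{ℓ,J} − 1 ≥ n/k − 2 > 4 log(1/δ). Then for every arm i ∈ A, the total pull count satisfies N_i ≥ (σ_i²/σ_max²) · α · (n/k − 1), where α = (1 − 2√(log(1/δ)/(n/k − 2))) / (1 + 2√(log(1/δ)/(n/k − 2)) + 2 log(1/δ)/(n/k − 2)). -/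
open Finset Real
open scoped ENNReal NNReal

/-- Greedy sequential allocation over a finite type of `k` arms with
budget `n` rounds and time-varying positive weights `U t i`: in each round `t < n` the
pulled arm `I t` maximizes `U t i / N t i`, where `N t i = #{ℓ < t : I ℓ = i}` (convention
`x / 0 = ∞`, in `ℝ≥0∞`).  Given positive variances `v i = σ_i²` with maximum `vmax`,
`δ ∈ (0,1)`, an arm `J` with maximal total pulls, and `ℓ` the last round with `I ℓ = J`,
suppose (a) `U ℓ i ≥ v i` for all `i`; (b) `U ℓ J` is at most
`v J · (1 + 2√(log(1/δ)/(N ℓ J − 1)) + 2 log(1/δ)/(N ℓ J − 1)) / (1 − 2√(log(1/δ)/(N ℓ J − 1)))`;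
and (c) `N ℓ J − 1 ≥ n/k − 2 > 4 log(1/δ)`.  Then every arm `i` satisfies
`N_i ≥ (v i / vmax) · α · (n/k − 1)` with
`α = (1 − 2√(log(1/δ)/(n/k − 2))) / (1 + 2√(log(1/δ)/(n/k − 2)) + 2 log(1/δ)/(n/k − 2))`. -/
theorem greedy_allocation_pull_lower_bound_with_variance_ucb
    {ι : Type*} [Fintype ι] [DecidableEq ι] [Nonempty ι]
    (k : ℕ) (hk : Fintype.card ι = k)
    (n : ℕ) (U : ℕ → ι → ℝ) (hU : ∀ t i, 0 < U t i)
    (I : ℕ → ι)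
    (N : ℕ → ι → ℕ)
    (hN : ∀ t i, N t i = ((Finset.range t).filter (fun m => I m = i)).card)
    (hgreedy : ∀ t < n, ∀ j : ι,
      ENNReal.ofReal (U t j) / (N t j : ℝ≥0∞)
        ≤ ENNReal.ofReal (U t (I t)) / (N t (I t) : ℝ≥0∞))
    (v : ι → ℝ) (hv : ∀ i, 0 < v i)
    (vmax : ℝ) (hvmax : IsGreatest (Set.range v) vmax)
    (δ : ℝ) (hδ : δ ∈ Set.Ioo (0 : ℝ) 1)
    (J : ι) (hJ : ∀ i : ι, N n i ≤ N n J)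
    (l : ℕ) (hl : l < n) (hlJ : I l = J)
    (hlast : ∀ t, l < t → t < n → I t ≠ J)
    (ha : ∀ i : ι, v i ≤ U l i)
    (hb : U l J ≤ v J *
      (1 + 2 * Real.sqrt (Real.log (1 / δ) / ((N l J : ℝ) - 1))
         + 2 * Real.log (1 / δ) / ((N l J : ℝ) - 1))
      / (1 - 2 * Real.sqrt (Real.log (1 / δ) / ((N l J : ℝ) - 1))))
    (hc1 : (N l J : ℝ) - 1 ≥ (n : ℝ) / k - 2)
    (hc2 : (n : ℝ) / k - 2 > 4 * Real.log (1 / δ)) :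
    ∀ i : ι, (N n i : ℝ) ≥ v i / vmax *
      ((1 - 2 * Real.sqrt (Real.log (1 / δ) / ((n : ℝ) / k - 2)))
        / (1 + 2 * Real.sqrt (Real.log (1 / δ) / ((n : ℝ) / k - 2))
             + 2 * Real.log (1 / δ) / ((n : ℝ) / k - 2)))
      * ((n : ℝ) / k - 1) := by
  intro i
  set L := Real.log (1 / δ) with hLdef
  have hL : 0 < L := by
    apply Real.log_pos
    rw [lt_div_iff₀ hδ.1]
    linarith [hδ.2]
  set x := (n : ℝ) / k - 2 with hxdef
  have hx : 0 < x := by linarith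
  set m := (N l J : ℝ) - 1 with hmdef
  have hm : x ≤ m := hc1
  have hmpos : 0 < m := lt_of_lt_of_le hx hm
  set sx := Real.sqrt (L / x) with hsxdef
  set sm := Real.sqrt (L / m) with hsmdef
  clear_value L x m sx sm
  have hsx0 : 0 ≤ sx := by rw [hsxdef]; exact Real.sqrt_nonneg _
  have hsm0 : 0 ≤ sm := by rw [hsmdef]; exact Real.sqrt_nonneg _
  have hLx : L / x < 1 / 4 := by rw [div_lt_iff₀ hx]; linarith
  have hLm : L / m ≤ L / x := by
    apply div_le_div_of_nonneg_left hL.le hx hm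
  have hsx : sx < 1 / 2 := by
    rw [hsxdef, show (1:ℝ)/2 = Real.sqrt (1/4) by
      rw [show (1:ℝ)/4 = (1/2)^2 by norm_num, Real.sqrt_sq (by norm_num)]]
    exact Real.sqrt_lt_sqrt (div_nonneg hL.le hx.le) hLx
  have hsmx : sm ≤ sx := by rw [hsmdef, hsxdef]; exact Real.sqrt_le_sqrt hLm
  -- denominators/numerators
  have hdenx : 0 < 1 - 2 * sx := by linarith
  have hdenm : 0 < 1 - 2 * sm := by linarith
  have hdenle : 1 - 2 * sx ≤ 1 - 2 * sm := by linarith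
  have hLm0 : 0 ≤ L / m := div_nonneg hL.le hmpos.le
  have hnumm : 0 < 1 + 2 * sm + 2 * L / m := by
    have : 2 * L / m = 2 * (L / m) := by ring
    rw [this]; linarith
  have hnumle : 1 + 2 * sm + 2 * L / m ≤ 1 + 2 * sx + 2 * L / x := by
    have h1 : 2 * L / m = 2 * (L / m) := by ring
    have h2 : 2 * L / x = 2 * (L / x) := by ring
    rw [h1, h2]; linarith
  -- greedy step at round l
  have hg := hgreedy l hl i
  rw [hlJ] at hg
  have hNlJ1 : (1 : ℝ) < (N l J : ℝ) := by linarith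
  have hNlJpos : 0 < N l J := by exact_mod_cast lt_trans zero_lt_one hNlJ1
  have hNlJposR : (0 : ℝ) < (N l J : ℝ) := by exact_mod_cast hNlJpos
  have hNli : 0 < N l i := by
    by_contra h
    push_neg at h
    have h' : N l i = 0 := Nat.le_zero.mp h
    rw [h'] at hg
    simp only [Nat.cast_zero, ENNReal.div_zero (by
      simp [ENNReal.ofReal_eq_zero, not_le, hU l i] : ENNReal.ofReal (U l i) ≠ 0)] at hg
    have : ENNReal.ofReal (U l J) / (N l J : ℝ≥0∞) < ⊤ :=
      ENNReal.div_lt_top ENNReal.ofReal_ne_top (by exact_mod_cast hNlJpos.ne')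
    exact absurd (top_le_iff.mp hg) this.ne
  have hNliR : (0 : ℝ) < (N l i : ℝ) := by exact_mod_cast hNli
  have hreal : U l i / (N l i : ℝ) ≤ U l J / (N l J : ℝ) := by
    have h1 : ENNReal.ofReal (U l i / (N l i : ℝ)) ≤ ENNReal.ofReal (U l J / (N l J : ℝ)) := by
      rw [ENNReal.ofReal_div_of_pos hNliR, ENNReal.ofReal_div_of_pos hNlJposR,
        ENNReal.ofReal_natCast, ENNReal.ofReal_natCast]
      exact hg
    exact (ENNReal.ofReal_le_ofReal_iff (div_nonneg (hU l J).le hNlJposR.le)).mp h1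
  have hkey : U l i * (N l J : ℝ) ≤ U l J * (N l i : ℝ) := by
    rw [div_le_div_iff₀ hNliR hNlJposR] at hreal
    exact hreal
  -- counting facts
  have hkpos : 0 < k := hk ▸ Fintype.card_pos
  have hkR : (0 : ℝ) < (k : ℝ) := by exact_mod_cast hkpos
  have hsum : ∑ j, N n j = n := by
    simp only [hN]
    have h := Finset.card_eq_sum_card_fiberwise
      (s := Finset.range n) (t := Finset.univ) (f := I) (fun t _ => Finset.mem_univ (I t))
    simpa [Finset.card_range] using h.symm
  have hnk : n ≤ k * N n J := by
    calc n = ∑ j, N n j := hsum.symm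
    _ ≤ ∑ _j : ι, N n J := Finset.sum_le_sum (fun j _ => hJ j)
    _ = k * N n J := by rw [Finset.sum_const, Finset.card_univ, hk, smul_eq_mul]
  have hfilter : (Finset.range n).filter (fun t => I t = J)
      = (Finset.range (l + 1)).filter (fun t => I t = J) := by
    ext t
    simp only [Finset.mem_filter, Finset.mem_range]
    constructor
    · rintro ⟨htn, htJ⟩
      refine ⟨?_, htJ⟩
      by_contra h
      exact hlast t (by omega) htn htJ
    · rintro ⟨htl, htJ⟩
      exact ⟨by omega, htJ⟩
  have hNnJ1 : N n J = N l J + 1 := by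
    rw [hN, hN, hfilter, Finset.range_add_one, Finset.filter_insert, if_pos hlJ,
      Finset.card_insert_of_notMem (by simp)]
  have hmono : N l i ≤ N n i := by
    rw [hN, hN]
    exact Finset.card_le_card (Finset.filter_subset_filter _ (Finset.range_subset_range.mpr hl.le))
  have hA : (n : ℝ) / k - 1 ≤ (N l J : ℝ) := by
    have h1 : (n : ℝ) ≤ (k : ℝ) * (N n J : ℝ) := by exact_mod_cast hnk
    have h2 : (n : ℝ) / k ≤ (N n J : ℝ) := by
      rw [div_le_iff₀ hkR]; linarith
    have h3 : (N n J : ℝ) = (N l J : ℝ) + 1 := by exact_mod_cast hNnJ1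
    linarith
  have hA0 : (0 : ℝ) ≤ (n : ℝ) / k - 1 := by
    have h := hx
    rw [hxdef] at h
    linarith
  -- vmax facts
  obtain ⟨j0, hj0⟩ := hvmax.1
  have hvmaxpos : 0 < vmax := hj0 ▸ hv j0
  have hvJmax : v J ≤ vmax := hvmax.2 ⟨J, rfl⟩
  have hUlJpos : 0 < U l J := hU l J
  -- key ratio inequality
  have h2 : v i / v J * ((1 - 2 * sm) / (1 + 2 * sm + 2 * L / m)) ≤ U l i / U l J := by
    have hb' : U l J * (1 - 2 * sm) ≤ v J * (1 + 2 * sm + 2 * L / m) := by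
      rw [← le_div_iff₀ hdenm]
      exact hb
    have e1 : v i / v J * ((1 - 2 * sm) / (1 + 2 * sm + 2 * L / m))
        = v i * (1 - 2 * sm) / (v J * (1 + 2 * sm + 2 * L / m)) := div_mul_div_comm _ _ _ _
    rw [e1, div_le_div_iff₀ (mul_pos (hv J) hnumm) hUlJpos]
    have t1 : v i * (U l J * (1 - 2 * sm)) ≤ v i * (v J * (1 + 2 * sm + 2 * L / m)) :=
      mul_le_mul_of_nonneg_left hb' (hv i).le
    have t2 : v i * (v J * (1 + 2 * sm + 2 * L / m))
        ≤ U l i * (v J * (1 + 2 * sm + 2 * L / m)) :=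
      mul_le_mul_of_nonneg_right (ha i) (mul_pos (hv J) hnumm).le
    have e2 : v i * (1 - 2 * sm) * U l J = v i * (U l J * (1 - 2 * sm)) := by ring
    rw [e2]
    exact le_trans t1 t2
  have h3 : U l i / U l J * (N l J : ℝ) ≤ (N l i : ℝ) := by
    rw [div_mul_eq_mul_div, div_le_iff₀ hUlJpos]
    linarith [hkey]
  have hα : (1 - 2 * sx) / (1 + 2 * sx + 2 * L / x)
      ≤ (1 - 2 * sm) / (1 + 2 * sm + 2 * L / m) :=
    div_le_div₀ hdenm.le hdenle hnumm hnumle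
  have hvi' : v i / vmax ≤ v i / v J :=
    div_le_div_of_nonneg_left (hv i).le (hv J) hvJmax
  have hfinal : v i / vmax * ((1 - 2 * sx) / (1 + 2 * sx + 2 * L / x)) * ((n : ℝ) / k - 1)
      ≤ (N l i : ℝ) := by
    calc v i / vmax * ((1 - 2 * sx) / (1 + 2 * sx + 2 * L / x)) * ((n : ℝ) / k - 1)
        ≤ v i / v J * ((1 - 2 * sm) / (1 + 2 * sm + 2 * L / m)) * (N l J : ℝ) := by
          have hnumx : 0 < 1 + 2 * sx + 2 * L / x := lt_of_lt_of_le hnumm hnumle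
          have hb1 : 0 ≤ (1 - 2 * sx) / (1 + 2 * sx + 2 * L / x) :=
            div_nonneg hdenx.le hnumx.le
          have hb2 : 0 ≤ v i / v J := div_nonneg (hv i).le (hv J).le
          have hb3 : 0 ≤ v i / v J * ((1 - 2 * sm) / (1 + 2 * sm + 2 * L / m)) :=
            mul_nonneg hb2 (div_nonneg hdenm.le hnumm.le)
          exact mul_le_mul (mul_le_mul hvi' hα hb1 hb2) hA hA0 hb3
    _ ≤ U l i / U l J * (N l J : ℝ) :=
          mul_le_mul_of_nonneg_right h2 hNlJposR.le
    _ ≤ (N l i : ℝ) := h3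
  have hmonoR : (N l i : ℝ) ≤ (N n i : ℝ) := by exact_mod_cast hmono
  exact le_trans hfinal hmonoR
end
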